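/- Let m ≥ |q| and v_t as in (RN-velocity). Then V_t(x) := v_t(x)·(e^{−2t} + m/|x| + e^{2t}(m²−q²)/(4|x|²))^{1/2} satisfies the linear equation Δ V_t = (3/4) Ũ_t^{−4} |E_δ|² V_t on ℝ³ \ {0}, where Ũ_t² = e^{−2t} + m/|x| + e^{2t}(m²−q²)/(4|x|²) and |E_δ|² = q²/|x|⁴. -/

import Mathlib

noncomputable def rnUt (m q t : ℝ) (s : ℝ) : ℝ :=
  Real.sqrt (Real.exp (-2*t) + m / s + Real.exp (2*t) * (m^2 - q^2) / (4 * s^2))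

noncomputable def rnVel (m q t : ℝ) (s : ℝ) : ℝ :=
  (-Real.exp (-2*t) + Real.exp (2*t) * (m^2 - q^2) / (4 * s^2)) /
  (Real.exp (-2*t) + m / s + Real.exp (2*t) * (m^2 - q^2) / (4 * s^2))

lemma hdivpow (c : ℝ) (k : ℕ) {s : ℝ} (hs : s ≠ 0) :
    HasDerivAt (fun x : ℝ => c / x ^ (k+1)) (-((k+1 : ℕ) * c) / s ^ (k+2)) s := by
  have h := ((hasDerivAt_pow (k+1) s).inv (pow_ne_zero _ hs)).const_mul c
  have hfun : (fun x : ℝ => c / x ^ (k+1)) = fun x => c * (x ^ (k+1))⁻¹ := by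
    funext x; rw [div_eq_mul_inv]
  rw [hfun]
  refine h.congr_deriv (Eq.symm ?_)
  simp only [Nat.add_sub_cancel]
  field_simp
  ring

noncomputable def Pf (a b m : ℝ) (x : ℝ) : ℝ := a + m / x^1 + b / x^2
noncomputable def Af (a b : ℝ) (x : ℝ) : ℝ := -a + b / x^2
noncomputable def Nf (a b m : ℝ) (x : ℝ) : ℝ :=
  (-(a*m)/2) / x^2 + (-(3*a*b)) / x^3 + (-(3/2*(b*m))) / x^4 + (-(b^2)) / x^5

lemma hasDerivAt_Pf (a b m : ℝ) {s : ℝ} (hs : s ≠ 0) :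
    HasDerivAt (Pf a b m) (-(m/s^2) - 2*b/s^3) s := by
  have h := ((hdivpow m 0 hs).const_add a).add (hdivpow b 1 hs)
  refine h.congr_deriv (Eq.symm ?_)
  push_cast
  ring

lemma hasDerivAt_Af (a b : ℝ) {s : ℝ} (hs : s ≠ 0) :
    HasDerivAt (Af a b) (-(2*b)/s^3) s := by
  have h := (hdivpow b 1 hs).const_add (-a)
  refine h.congr_deriv (Eq.symm ?_)
  norm_num

lemma hasDerivAt_Nf (a b m : ℝ) {s : ℝ} (hs : s ≠ 0) :
    HasDerivAt (Nf a b m)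
      ((a*m)/s^3 + (9*a*b)/s^4 + (6*b*m)/s^5 + (5*b^2)/s^6) s := by
  have h := (((hdivpow (-(a*m)/2) 1 hs).add (hdivpow (-(3*a*b)) 2 hs)).add
      (hdivpow (-(3/2*(b*m))) 3 hs)).add (hdivpow (-(b^2)) 4 hs)
  refine h.congr_deriv (Eq.symm ?_)
  push_cast
  field_simp
  ring

lemma key1 (u Ps As Ns As' Ps' : ℝ) (hu : u ≠ 0) (hu2 : u^2 = Ps)
    (hid : 2*Ns = 2*As'*Ps - As*Ps') :
    (As' * u - As * (Ps' / (2*u))) / u^2 = Ns / u^3 := by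
  subst hu2
  field_simp
  linear_combination (-1) * hid

lemma key2 (u Ps As Ns Ns' Ps' s q : ℝ) (hu : u ≠ 0) (hs : s ≠ 0) (hu2 : u^2 = Ps)
    (hid : Ns' * Ps - (3/2)*Ns*Ps' + (2/s)*Ns*Ps = (3/4)*(q^2/s^4)*As) :
    (Ns' * u^3 - Ns * (3*u^2*(Ps'/(2*u))))/(u^3)^2 + (2/s)*(Ns/u^3)
      = (3/4)*u⁻¹^4*(q^2/s^4)*(As/u) := by
  subst hu2
  field_simp at hid ⊢
  linear_combination hid

lemma idN (a b m : ℝ) {s : ℝ} (hs : s ≠ 0) :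
    2 * Nf a b m s
      = 2*(-(2*b)/s^3) * Pf a b m s - Af a b s * (-(m/s^2) - 2*b/s^3) := by
  unfold Nf Pf Af
  field_simp
  ring

lemma idMain (a b m q : ℝ) (hab : 4*a*b = m^2 - q^2) {s : ℝ} (hs : s ≠ 0) :
    ((a*m)/s^3 + (9*a*b)/s^4 + (6*b*m)/s^5 + (5*b^2)/s^6) * Pf a b m s
      - (3/2) * Nf a b m s * (-(m/s^2) - 2*b/s^3)
      + (2/s) * Nf a b m s * Pf a b m s
      = (3/4)*(q^2/s^4)*(Af a b s) := by
  have hq : q^2 = m^2 - 4*a*b := by linarith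
  rw [hq]
  unfold Nf Pf Af
  field_simp
  ring



/-- `V_t = v_t Ũ_t` satisfies the linearized Lichnerowicz equation
`Δ V = (3/4) Ũ_t⁻⁴ |E_δ|² V` with `|E_δ|² = q²/s⁴`, where `Δ` is the
Euclidean Laplacian acting on radial functions, `ΔV = V'' + (2/s)V'`. -/
theorem rn_velocity_solves_linearized (m q t : ℝ) (hmq : |q| ≤ m) :
    let V : ℝ → ℝ := fun s => rnVel m q t s * rnUt m q t s
    ∀ s : ℝ, 0 < s →
      deriv (deriv V) s + (2 / s) * deriv V s
        = (3/4) * (rnUt m q t s)⁻¹ ^ 4 * (q^2 / s^4) * V s := by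
  intro V s hs
  have hVdef : V = fun x => rnVel m q t x * rnUt m q t x := rfl
  set a : ℝ := Real.exp (-2*t) with ha
  set b : ℝ := Real.exp (2*t) * (m^2-q^2)/4 with hb
  have ha0 : 0 < a := Real.exp_pos _
  have hm : 0 ≤ m := (abs_nonneg q).trans hmq
  have hq2 : q^2 ≤ m^2 := by nlinarith [sq_abs q, abs_nonneg q]
  have hb0 : 0 ≤ b := by
    have h1 : 0 ≤ m^2 - q^2 := by linarith
    have h2 := (Real.exp_pos (2*t)).le
    rw [hb]; positivity
  have hab : 4*a*b = m^2 - q^2 := by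
    rw [ha, hb, show (-2*t:ℝ) = -(2*t) by ring, Real.exp_neg]
    field_simp
  have hPposAll : ∀ x : ℝ, 0 < x → 0 < Pf a b m x := by
    intro x hx
    unfold Pf
    have h1 : 0 ≤ m / x^1 := by positivity
    have h2 : 0 ≤ b / x^2 := by positivity
    linarith
  have hUt : ∀ x : ℝ, rnUt m q t x = Real.sqrt (Pf a b m x) := by
    intro x
    unfold rnUt Pf
    rw [ha, hb]
    congr 1
    ring
  have hVel : ∀ x : ℝ, rnVel m q t x = Af a b x / Pf a b m x := by
    intro x
    unfold rnVel Pf Af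
    rw [ha, hb]
    ring
  have hVpt : ∀ x : ℝ, 0 < x → V x = Af a b x / Real.sqrt (Pf a b m x) := by
    intro x hx
    have hP := hPposAll x hx
    have hu0 : Real.sqrt (Pf a b m x) ≠ 0 := (Real.sqrt_pos.mpr hP).ne'
    show rnVel m q t x * rnUt m q t x = _
    rw [hVel, hUt, div_mul_eq_mul_div, div_eq_div_iff hP.ne' hu0, mul_assoc,
      Real.mul_self_sqrt hP.le]
  have hVev : ∀ x : ℝ, 0 < x →
      V =ᶠ[nhds x] fun y => Af a b y / Real.sqrt (Pf a b m y) :=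
    fun x hx => Filter.eventuallyEq_of_mem (Ioi_mem_nhds hx) (fun y hy => hVpt y hy)
  have hDV : ∀ x : ℝ, 0 < x →
      HasDerivAt (fun y => Af a b y / Real.sqrt (Pf a b m y))
        (Nf a b m x / Real.sqrt (Pf a b m x)^3) x := by
    intro x hx
    have hP := hPposAll x hx
    have hu0 : Real.sqrt (Pf a b m x) ≠ 0 := (Real.sqrt_pos.mpr hP).ne'
    have hsq := (hasDerivAt_Pf a b m hx.ne').sqrt hP.ne'
    have h := (hasDerivAt_Af a b hx.ne').div hsq hu0
    refine h.congr_deriv (Eq.symm ?_)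
    exact (key1 _ _ _ _ _ _ hu0 (Real.sq_sqrt hP.le) (idN a b m hx.ne')).symm
  have hderivV : ∀ x : ℝ, 0 < x →
      deriv V x = Nf a b m x / Real.sqrt (Pf a b m x)^3 := by
    intro x hx
    rw [(hVev x hx).deriv_eq, (hDV x hx).deriv]
  have hderivVev : deriv V =ᶠ[nhds s] fun y => Nf a b m y / Real.sqrt (Pf a b m y)^3 :=
    Filter.eventuallyEq_of_mem (Ioi_mem_nhds hs) (fun y hy => hderivV y hy)
  have hP := hPposAll s hs
  have hu0 : Real.sqrt (Pf a b m s) ≠ 0 := (Real.sqrt_pos.mpr hP).ne'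
  have hsq := (hasDerivAt_Pf a b m hs.ne').sqrt hP.ne'
  have hD2' : HasDerivAt (fun y => Nf a b m y / Real.sqrt (Pf a b m y)^3)
      ((((a*m)/s^3 + (9*a*b)/s^4 + (6*b*m)/s^5 + (5*b^2)/s^6) * Real.sqrt (Pf a b m s)^3
        - Nf a b m s * (3 * Real.sqrt (Pf a b m s)^2 *
            ((-(m/s^2) - 2*b/s^3) / (2 * Real.sqrt (Pf a b m s)))))
        / (Real.sqrt (Pf a b m s)^3)^2) s := by
    have h := (hasDerivAt_Nf a b m hs.ne').div (hsq.pow 3) (pow_ne_zero 3 hu0)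
    refine h.congr_deriv (Eq.symm ?_)
    simp only [Pi.pow_apply]
    norm_num
  rw [hderivVev.deriv_eq, hD2'.deriv, hderivV s hs, hUt, hVpt s hs]
  exact key2 (Real.sqrt (Pf a b m s)) (Pf a b m s) (Af a b s) (Nf a b m s)
    ((a*m)/s^3 + (9*a*b)/s^4 + (6*b*m)/s^5 + (5*b^2)/s^6) (-(m/s^2) - 2*b/s^3) s q
    hu0 hs.ne' (Real.sq_sqrt hP.le) (idMain a b m q hab hs.ne')
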